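/- arXiv:1509.06100 — 3 statements merged into one kernel-verified Lean document; each statement's English description precedes it below -/
import Mathlib

section
/- Let σ(z) = b(z)/a(z) and suppose f(z) = F(σ(z))/a(z) with a(z), a(α) ≠ 0. Then (R(b,a,α)f)(z) = -(R_{σ(α)}(id·F))(σ(z))/(a(α)a(z)), where (id·F)(w) = w·F(w), pointwise wherever σ(z) ≠ σ(α). -/
/-- Generalized resolvent operator `R(a,b,α)`. -/
noncomputable def Rab (a b : ℂ → ℂ) (α : ℂ) (f : ℂ → ℂ) : ℂ → ℂ :=
  fun z => (a z * f z - a α * f α) / (a α * b z - b α * a z)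

/-- Resolvent-like operator `R_u` (pointwise difference quotient). -/
noncomputable def Ru (u : ℂ) (F : ℂ → ℂ) : ℂ → ℂ :=
  fun w => (F w - F u) / (w - u)

/-- If `f(z) = F(σ(z))/a(z)` with `σ = b/a`, then
`(R(b,a,α)f)(z) = -(R_{σ(α)}(id·F))(σ(z))/(a(α)a(z))`. -/
theorem Rba_substitution (a b F : ℂ → ℂ) (α z : ℂ)
    (haz : a z ≠ 0) (haα : a α ≠ 0) (hσ : b z / a z ≠ b α / a α) :
    Rab b a α (fun u => F (b u / a u) / a u) z
      = -(Ru (b α / a α) (fun w => w * F w) (b z / a z)) / (a α * a z) := by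
  have h1 : b z * a α - b α * a z ≠ 0 := by
    intro h
    apply hσ
    field_simp
    linear_combination h
  simp only [Rab, Ru]
  have h2 : b z / a z - b α / a α ≠ 0 := sub_ne_zero.mpr hσ
  field_simp
  have h3 : a z * a α * (b α * a z - a α * b z) ≠ 0 := by
    refine mul_ne_zero (mul_ne_zero haz haα) ?_
    intro h; apply h1; linear_combination -h
  have h4 : (b z * a α - a z * b α) * (a α * a z) ≠ 0 := by
    refine mul_ne_zero ?_ (mul_ne_zero haα haz)
    intro h; apply h1; linear_combination h
  rw [neg_div', div_eq_div_iff (by intro h; apply h1; linear_combination -h) (by intro h; apply h1; linear_combination h)]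
  ring
end

section
/- In the quaternionic setting, for μ in the open half-space ℍ₊ and real α > 0, the slice hyperholomorphic kernel k(p,μ) = (|μ|² + 2Re(μ)p + p²)⁻¹(p + μ) satisfies k(α,μ) = (α + conj(μ))⁻¹ and R_α k(p,μ) = -k(p,μ)·(α + conj(μ))⁻¹ for all p in the domain, where (R_α f)(p) = (p - α)⁻¹(f(p) - f(α)). -/
open Quaternion

/-- The slice hyperholomorphic kernel of the Hardy space of the half-space. -/
noncomputable def kQ (p q : Quaternion ℝ) : Quaternion ℝ :=
  ((‖q‖ ^ 2 : ℝ) + (2 * q.re : ℝ) * p + p ^ 2)⁻¹ * (p + q)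

lemma key_id (α : ℝ) (μ p : Quaternion ℝ) :
    (p + μ) * ((α : Quaternion ℝ) + star μ)
      - (((‖μ‖ ^ 2 : ℝ) : Quaternion ℝ) + ((2 * μ.re : ℝ) : Quaternion ℝ) * p + p ^ 2)
      = -((p - (α : Quaternion ℝ)) * (p + μ)) := by
  have h1 : ((‖μ‖ ^ 2 : ℝ) : Quaternion ℝ) = μ * star μ := by
    rw [sq, ← normSq_eq_norm_mul_self, Quaternion.self_mul_star]
  rw [h1]
  ext <;> simp [pow_two] <;> ring

lemma comm_A (α : ℝ) (μ p : Quaternion ℝ) :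
    Commute (p - (α : Quaternion ℝ))
      (((‖μ‖ ^ 2 : ℝ) : Quaternion ℝ) + ((2 * μ.re : ℝ) : Quaternion ℝ) * p + p ^ 2) := by
  apply Commute.sub_left
  · exact ((Quaternion.coe_commute _ p).symm.add_right
        (((Quaternion.coe_commute _ p).symm.mul_right (Commute.refl p)))).add_right
      ((Commute.refl p).pow_right 2)
  · exact ((Quaternion.coe_commute _ _).add_right
        ((Quaternion.coe_commute _ _).mul_right (Quaternion.coe_commute _ p))).add_right
      ((Quaternion.coe_commute _ _).pow_right 2)

lemma A_ne_zero (μ p : Quaternion ℝ) (hμ : 0 < μ.re) (hp : 0 < p.re) :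
    (((‖μ‖ ^ 2 : ℝ) : Quaternion ℝ) + ((2 * μ.re : ℝ) : Quaternion ℝ) * p + p ^ 2) ≠ 0 := by
  intro h
  rw [Quaternion.ext_iff] at h
  simp [pow_two] at h
  obtain ⟨h1, h2, h3, h4⟩ := h
  have hc : 2 * μ.re + 2 * p.re > 0 := by linarith
  have hI : p.imI = 0 := by nlinarith [sq_nonneg p.imI]
  have hJ : p.imJ = 0 := by nlinarith [sq_nonneg p.imJ]
  have hK : p.imK = 0 := by nlinarith [sq_nonneg p.imK]
  rw [hI, hJ, hK] at h1
  nlinarith [sq_nonneg ‖μ‖, norm_nonneg μ, mul_pos hμ hp, mul_pos hp hp]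

/-- For real `α > 0` and `μ ∈ ℍ₊`: `k(α,μ) = (α + conj μ)⁻¹` and
`R_α k(·,μ) = -k(·,μ)(α + conj μ)⁻¹`. -/
theorem quaternionic_kernel_Ralpha (α : ℝ) (hα : 0 < α) (μ : Quaternion ℝ)
    (hμ : 0 < μ.re) :
    kQ (α : Quaternion ℝ) μ = ((α : Quaternion ℝ) + star μ)⁻¹ ∧
    ∀ p : Quaternion ℝ, 0 < p.re → p ≠ (α : Quaternion ℝ) →
      (p - (α : Quaternion ℝ))⁻¹ * (kQ p μ - kQ (α : Quaternion ℝ) μ)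
        = -(kQ p μ) * ((α : Quaternion ℝ) + star μ)⁻¹ := by
  set s : Quaternion ℝ := (α : Quaternion ℝ) + star μ with hs_def
  have hs : s ≠ 0 := by
    intro h
    have := congrArg QuaternionAlgebra.re h
    simp [hs_def] at this
    linarith
  have hm : ((α : Quaternion ℝ) + μ) ≠ 0 := by
    intro h
    have := congrArg QuaternionAlgebra.re h
    simp at this
    linarith
  have hAα : (((‖μ‖ ^ 2 : ℝ) : Quaternion ℝ)
        + ((2 * μ.re : ℝ) : Quaternion ℝ) * (α : Quaternion ℝ) + (α : Quaternion ℝ) ^ 2)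
      = ((α : Quaternion ℝ) + μ) * s := by
    have h := key_id α μ (α : Quaternion ℝ)
    rw [sub_self, zero_mul, neg_zero, sub_eq_zero] at h
    exact h.symm
  have h1 : kQ (α : Quaternion ℝ) μ = s⁻¹ := by
    rw [kQ, hAα, mul_inv_rev, mul_assoc, inv_mul_cancel₀ hm, mul_one]
  refine ⟨h1, ?_⟩
  intro p hp hpa
  have hpα : p - (α : Quaternion ℝ) ≠ 0 := sub_ne_zero.mpr hpa
  set A : Quaternion ℝ := ((‖μ‖ ^ 2 : ℝ) : Quaternion ℝ)
      + ((2 * μ.re : ℝ) : Quaternion ℝ) * p + p ^ 2 with hA_def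
  have hA : A ≠ 0 := A_ne_zero μ p hμ hp
  have hk : kQ p μ = A⁻¹ * (p + μ) := rfl
  have hcomm : (p - (α : Quaternion ℝ)) * A⁻¹ = A⁻¹ * (p - (α : Quaternion ℝ)) :=
    ((comm_A α μ p).inv_right₀).eq
  have hstep : kQ p μ - kQ (α : Quaternion ℝ) μ
      = (p - (α : Quaternion ℝ)) * (-(kQ p μ) * s⁻¹) := by
    rw [hk, h1]
    calc A⁻¹ * (p + μ) - s⁻¹
        = A⁻¹ * ((p + μ) * s - A) * s⁻¹ := by
          rw [mul_sub, sub_mul, inv_mul_cancel₀ hA, one_mul, mul_assoc, mul_assoc,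
            mul_inv_cancel₀ hs, mul_one]
      _ = A⁻¹ * -((p - (α : Quaternion ℝ)) * (p + μ)) * s⁻¹ := by rw [key_id]
      _ = (p - (α : Quaternion ℝ)) * (-(A⁻¹ * (p + μ)) * s⁻¹) := by
          rw [mul_neg, ← mul_assoc A⁻¹, ← hcomm]; noncomm_ring
  rw [hstep, ← mul_assoc, inv_mul_cancel₀ hpα, one_mul, hk]
end

section
/- For quaternions ν, μ ∈ ℍ₊, the kernel k(ν,μ) = (|μ|² + 2Re(μ)ν + ν²)⁻¹(ν + μ) satisfies the Sylvester-type equation ν·k(ν,μ) + k(ν,μ)·conj(μ) = 1. -/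
open Quaternion

set_option maxHeartbeats 1000000 in
/-- Sylvester-type equation `ν k(ν,μ) + k(ν,μ) conj(μ) = 1` for `ν, μ ∈ ℍ₊`. -/
theorem quaternionic_sylvester (ν μ : Quaternion ℝ) (hν : 0 < ν.re) (hμ : 0 < μ.re) :
    ν * kQ ν μ + kQ ν μ * star μ = 1 := by
  set d : Quaternion ℝ := ((‖μ‖ ^ 2 : ℝ) + (2 * μ.re : ℝ) * ν + ν ^ 2) with hd_def
  have hnorm : ‖μ‖ * ‖μ‖ = μ.re ^ 2 + μ.imI ^ 2 + μ.imJ ^ 2 + μ.imK ^ 2 := by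
    rw [← Quaternion.normSq_eq_norm_mul_self, Quaternion.normSq_def']
  have hd : d ≠ 0 := by
    intro h
    rw [hd_def] at h
    have hI := congrArg QuaternionAlgebra.imI h
    have hJ := congrArg QuaternionAlgebra.imJ h
    have hK := congrArg QuaternionAlgebra.imK h
    have hR := congrArg QuaternionAlgebra.re h
    simp [pow_two, Quaternion.re_mul, Quaternion.imI_mul, Quaternion.imJ_mul,
      Quaternion.imK_mul] at hI hJ hK hR
    have hsum : 2 * μ.re + 2 * ν.re > 0 := by linarith
    have hI' : ν.imI = 0 := by nlinarith [sq_nonneg (ν.imI)]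
    have hJ' : ν.imJ = 0 := by nlinarith [sq_nonneg (ν.imJ)]
    have hK' : ν.imK = 0 := by nlinarith [sq_nonneg (ν.imK)]
    rw [hI', hJ', hK', hnorm] at hR
    nlinarith [sq_nonneg μ.imI, sq_nonneg μ.imJ, sq_nonneg μ.imK, mul_pos hμ hν,
      mul_pos hν hν, mul_pos hμ hμ]
  have hcomm : Commute d ν := by
    rw [hd_def]
    refine Commute.add_left (Commute.add_left ?_ ?_) ?_
    · exact Quaternion.coe_commute _ ν
    · exact (Quaternion.coe_commute _ ν).mul_left (Commute.refl ν)
    · exact (Commute.refl ν).pow_left 2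
  have hkey : ν * (ν + μ) + (ν + μ) * star μ = d := by
    have h1 : μ + star μ = ((2 * μ.re : ℝ) : Quaternion ℝ) := Quaternion.self_add_star' μ
    have h2 : μ * star μ = ((‖μ‖ ^ 2 : ℝ) : Quaternion ℝ) := by
      rw [Quaternion.self_mul_star]
      congr 1
      rw [sq, Quaternion.normSq_eq_norm_mul_self]
    have h3 : ν * (ν + μ) + (ν + μ) * star μ
        = ν * ν + ν * (μ + star μ) + μ * star μ := by noncomm_ring
    rw [hd_def, h3, h1, h2, (Quaternion.coe_commute (2 * μ.re : ℝ) ν).eq]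
    noncomm_ring
  have hkQ : kQ ν μ = d⁻¹ * (ν + μ) := rfl
  have hinv : ν * d⁻¹ = d⁻¹ * ν := (hcomm.inv_left₀).eq.symm
  calc ν * kQ ν μ + kQ ν μ * star μ
      = d⁻¹ * (ν * (ν + μ) + (ν + μ) * star μ) := by
        rw [hkQ, ← mul_assoc, hinv, mul_assoc, mul_assoc, ← mul_add]
    _ = d⁻¹ * d := by rw [hkey]
    _ = 1 := inv_mul_cancel₀ hd
end
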